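/- (Proposition 1) Assume d/(m+n) < R* < d/m, x* < x̄ ≤ 1, K > (d − R*·m)/(m·x̄), and 0 < ε < β − x* if β < 1 while 0 < ε ≤ 1 − x* if β ≥ 1, where β is the larger real root of ζ(x) = 0. If x : [0,∞) → [0,1] is differentiable and satisfies x'(t) = g(x(t)) for all t ≥ 0 with x(0) ∈ (0,1], then x(t) → 1 as t → ∞; that is, every trajectory of the controlled replicator dynamics starting in (0,1] converges to 1. -/

import Mathlib

set_option maxHeartbeats 1000000


/-- Proposition 1: Under the gain and ε conditions, every trajectory of the
controlled replicator dynamics ẋ = g(x) on [0,1] with x(0) ∈ (0,1] converges to 1. -/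
theorem stmt_19 (m n : ℕ) (hm : 0 < m) (hn : 0 < n) (d Rstar K xbar ε β : ℝ)
    (hd : 0 < d) (hRs : 0 < Rstar) (hK : 0 < K)
    (h1 : d / ((m : ℝ) + n) < Rstar) (h2 : Rstar < d / (m : ℝ))
    (hxbar : 1 / (n : ℝ) * (d / Rstar - m) < xbar) (hxbar1 : xbar ≤ 1)
    (hKgain : (d - Rstar * m) / ((m : ℝ) * xbar) < K)
    (hβroot : -K * n * β ^ 2 + (K * n * xbar - K * m + Rstar * n) * β
        + (Rstar * m + K * m * xbar - d) = 0)
    (hβmax : ∀ y : ℝ, -K * n * y ^ 2 + (K * n * xbar - K * m + Rstar * n) * y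
        + (Rstar * m + K * m * xbar - d) = 0 → y ≤ β)
    (hε : 0 < ε)
    (hε1 : β < 1 → ε < β - 1 / (n : ℝ) * (d / Rstar - m))
    (hε2 : 1 ≤ β → ε ≤ 1 - 1 / (n : ℝ) * (d / Rstar - m))
    (x : ℝ → ℝ)
    (hmem : ∀ t : ℝ, 0 ≤ t → x t ∈ Set.Icc (0 : ℝ) 1)
    (hode : ∀ t : ℝ, 0 ≤ t →
      HasDerivAt x
        ((x t * (1 - x t) / ((m : ℝ) + n * x t)) *
          (Rstar + (if x t < 1 / (n : ℝ) * (d / Rstar - m) + ε then K * (xbar - x t) else 0)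
            - d / ((m : ℝ) + n * x t))) t)
    (h0 : x 0 ∈ Set.Ioc (0 : ℝ) 1) :
    Filter.Tendsto x Filter.atTop (nhds 1) := by
  have hP : (0:ℝ) < m := by exact_mod_cast hm
  have hN : (0:ℝ) < n := by exact_mod_cast hn
  set xs : ℝ := 1 / (n:ℝ) * (d / Rstar - m) with hxs_def
  clear_value xs
  -- basic facts about x*
  have hdm : Rstar * m < d := by
    rw [lt_div_iff₀ hP] at h2; linarith
  have hxs_pos : 0 < xs := by
    rw [hxs_def]
    have : (0:ℝ) < d / Rstar - m := by
      rw [sub_pos, lt_div_iff₀ hRs]; nlinarith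
    positivity
  have hPNxs : (m:ℝ) + n * xs = d / Rstar := by
    rw [hxs_def]; field_simp; ring
  have hxbar_pos : 0 < xbar := hxs_pos.trans hxbar
  have hC : 0 < Rstar * m + K * m * xbar - d := by
    have h := (div_lt_iff₀ (by positivity : (0:ℝ) < (m:ℝ) * xbar)).mp hKgain
    nlinarith
  -- the other root γ of the quadratic, and the factorization
  set γ : ℝ := (K * n * xbar - K * m + Rstar * n) / (K * n) - β with hγ_def
  clear_value γ
  have hKn : (0:ℝ) < K * n := by positivity
  have hfact : ∀ y : ℝ, -K * n * y ^ 2 + (K * n * xbar - K * m + Rstar * n) * y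
        + (Rstar * m + K * m * xbar - d) = K * n * (β - y) * (y - γ) := by
    intro y
    rw [hγ_def]
    have h : K * (n:ℝ) ≠ 0 := by positivity
    have key : K * n * ((K * n * xbar - K * m + Rstar * n) / (K * n))
        = K * n * xbar - K * m + Rstar * n := by field_simp
    linear_combination hβroot + (β - y) * key
  have hγroot : -K * n * γ ^ 2 + (K * n * xbar - K * m + Rstar * n) * γ
        + (Rstar * m + K * m * xbar - d) = 0 := by
    rw [hfact γ]; ring
  have hγβ : γ ≤ β := hβmax γ hγroot
  have hβγ : K * n * (β * γ) < 0 := by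
    have h0' := hfact 0
    nlinarith
  have hβpos : 0 < β := by
    by_contra hb
    push_neg at hb
    have hγ0 : γ ≤ 0 := hγβ.trans hb
    have h1' : 0 ≤ β * γ := by nlinarith [mul_nonneg (neg_nonneg.2 hb) (neg_nonneg.2 hγ0)]
    nlinarith [mul_nonneg hKn.le h1']
  have hγneg : γ < 0 := by
    by_contra hb
    push_neg at hb
    have h1' : 0 ≤ β * γ := mul_nonneg hβpos.le hb
    nlinarith [mul_nonneg hKn.le h1']
  -- positivity of the quadratic on [0, β)
  have hZpos : ∀ y : ℝ, 0 ≤ y → y < β →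
      0 < -K * n * y ^ 2 + (K * n * xbar - K * m + Rstar * n) * y
        + (Rstar * m + K * m * xbar - d) := by
    intro y hy0 hyβ
    rw [hfact y]
    have : 0 < β - y := by linarith
    have : 0 < y - γ := by linarith
    positivity
  have hZlb : ∀ y M : ℝ, 0 ≤ y → y ≤ M → M < β →
      K * n * (β - M) * (0 - γ) ≤ -K * n * y ^ 2 + (K * n * xbar - K * m + Rstar * n) * y
        + (Rstar * m + K * m * xbar - d) := by
    intro y M hy0 hyM hMβ
    rw [hfact y]
    have h1' : β - M ≤ β - y := by linarith
    have h2' : 0 - γ ≤ y - γ := by linarith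
    have h3' : 0 < β - M := by linarith
    have h4' : 0 < 0 - γ := by linarith
    have h5' : (β - M) * (0 - γ) ≤ (β - y) * (y - γ) :=
      mul_le_mul h1' h2' h4'.le (by linarith)
    nlinarith [mul_le_mul_of_nonneg_left h5' hKn.le]
  -- branch-1 values are below β
  have hbr : ∀ s : ℝ, s < xs + ε → s ≤ 1 → s < β := by
    intro s h1s h2s
    by_cases hb : β < 1
    · have := hε1 hb; linarith
    · push_neg at hb
      have := hε2 hb; linarith
  -- the feedback term is strictly positive on [0,1]
  have hφpos : ∀ s : ℝ, 0 ≤ s → s ≤ 1 →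
      0 < Rstar + (if s < xs + ε then K * (xbar - s) else 0) - d / ((m:ℝ) + n * s) := by
    intro s h0s h1s
    have hD : 0 < (m:ℝ) + n * s := by positivity
    by_cases hif : s < xs + ε
    · rw [if_pos hif]
      have hZ := hZpos s h0s (hbr s hif h1s)
      have hring : (Rstar + K * (xbar - s)) * ((m:ℝ) + n * s) - d
          = -K * n * s ^ 2 + (K * n * xbar - K * m + Rstar * n) * s
            + (Rstar * m + K * m * xbar - d) := by ring
      have hdd : d / ((m:ℝ) + n * s) < Rstar + K * (xbar - s) := by
        rw [div_lt_iff₀ hD]; nlinarith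
      linarith
    · rw [if_neg hif]
      push_neg at hif
      have hD' : d / Rstar < (m:ℝ) + n * s := by
        rw [← hPNxs]; nlinarith
      have : d / ((m:ℝ) + n * s) < Rstar := by
        rw [div_lt_iff₀ hD]
        rw [div_lt_iff₀ hRs] at hD'
        nlinarith
      linarith
  -- uniform lower bound on the vector field over [x 0, L'] when L' < 1
  have ha0 : 0 < x 0 := h0.1
  have hglb : ∀ L' : ℝ, L' < 1 → x 0 ≤ L' → ∃ c : ℝ, 0 < c ∧ ∀ s : ℝ, x 0 ≤ s → s ≤ L' →
      c ≤ (s * (1 - s) / ((m:ℝ) + n * s)) *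
        (Rstar + (if s < xs + ε then K * (xbar - s) else 0) - d / ((m:ℝ) + n * s)) := by
    intro L' hL'1 hL'0
    set M : ℝ := min L' (xs + ε) with hM_def
    clear_value M
    have hMβ : M < β := by
      by_cases hb : β < 1
      · have := hε1 hb
        have := min_le_right L' (xs + ε)
        linarith
      · push_neg at hb
        have := min_le_left L' (xs + ε)
        linarith
    have hc2 : 0 < Rstar - d / ((m:ℝ) + n * (xs + ε)) := by
      have hD : 0 < (m:ℝ) + n * (xs + ε) := by positivity
      have hD' : d / Rstar < (m:ℝ) + n * (xs + ε) := by
        rw [← hPNxs]; nlinarith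
      have : d / ((m:ℝ) + n * (xs + ε)) < Rstar := by
        rw [div_lt_iff₀ hD]
        rw [div_lt_iff₀ hRs] at hD'
        nlinarith
      linarith
    have hc1 : 0 < K * n * (β - M) * (0 - γ) := by
      have : 0 < β - M := by linarith
      have : 0 < 0 - γ := by linarith
      positivity
    have hMN : (0:ℝ) < (m:ℝ) + n := by positivity
    refine ⟨(x 0 * (1 - L') / ((m:ℝ) + n)) *
        min (K * n * (β - M) * (0 - γ) / ((m:ℝ) + n)) (Rstar - d / ((m:ℝ) + n * (xs + ε))),
      ?_, ?_⟩
    · have hmin : 0 < min (K * n * (β - M) * (0 - γ) / ((m:ℝ) + n))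
          (Rstar - d / ((m:ℝ) + n * (xs + ε))) := lt_min (by positivity) hc2
      have : 0 < x 0 * (1 - L') / ((m:ℝ) + n) := by
        have : 0 < 1 - L' := by linarith
        positivity
      positivity
    · intro s hsa hsL'
      have h0s : 0 ≤ s := le_trans ha0.le hsa
      have h1s : s ≤ 1 := le_trans hsL' hL'1.le
      have hD : 0 < (m:ℝ) + n * s := by positivity
      have hDle : (m:ℝ) + n * s ≤ (m:ℝ) + n := by
        have := mul_le_mul_of_nonneg_left h1s hN.le
        linarith
      -- front factor bound
      have hnum : x 0 * (1 - L') ≤ s * (1 - s) :=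
        mul_le_mul hsa (by linarith) (by linarith) h0s
      have hnn : 0 ≤ s * (1 - s) := mul_nonneg h0s (by linarith)
      have hfront : x 0 * (1 - L') / ((m:ℝ) + n) ≤ s * (1 - s) / ((m:ℝ) + n * s) :=
        div_le_div₀ hnn hnum hD hDle
      -- feedback bound
      have hφb : min (K * n * (β - M) * (0 - γ) / ((m:ℝ) + n))
            (Rstar - d / ((m:ℝ) + n * (xs + ε)))
          ≤ Rstar + (if s < xs + ε then K * (xbar - s) else 0) - d / ((m:ℝ) + n * s) := by
        by_cases hif : s < xs + ε
        · rw [if_pos hif]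
          have hsM : s ≤ M := by rw [hM_def]; exact le_min hsL' hif.le
          have hZ := hZlb s M h0s hsM hMβ
          have heq : Rstar + K * (xbar - s) - d / ((m:ℝ) + n * s)
              = (-K * n * s ^ 2 + (K * n * xbar - K * m + Rstar * n) * s
                + (Rstar * m + K * m * xbar - d)) / ((m:ℝ) + n * s) := by
            field_simp
            ring
          rw [heq]
          refine le_trans (min_le_left _ _) ?_
          exact div_le_div₀ (le_of_lt (lt_of_lt_of_le hc1 hZ)) hZ hD hDle
        · rw [if_neg hif]
          push_neg at hif
          have hD2 : 0 < (m:ℝ) + n * (xs + ε) := by positivity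
          have : d / ((m:ℝ) + n * s) ≤ d / ((m:ℝ) + n * (xs + ε)) := by
            apply div_le_div_of_nonneg_left hd.le hD2
            have := mul_le_mul_of_nonneg_left hif hN.le
            linarith
          refine le_trans (min_le_right _ _) (by linarith)
      have hφnn : 0 ≤ Rstar + (if s < xs + ε then K * (xbar - s) else 0) - d / ((m:ℝ) + n * s) :=
        (hφpos s h0s h1s).le
      have hfnn : 0 ≤ x 0 * (1 - L') / ((m:ℝ) + n) := by
        have : 0 < 1 - L' := by linarith
        positivity
      exact mul_le_mul hfront hφb (le_min (div_nonneg hc1.le hMN.le) hc2.le)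
        (div_nonneg hnn hD.le)
  -- monotonicity of the trajectory
  have hcont : ContinuousOn x (Set.Ici (0:ℝ)) :=
    fun t ht => (hode t ht).continuousAt.continuousWithinAt
  have hderiv : ∀ t : ℝ, 0 ≤ t → deriv x t
      = (x t * (1 - x t) / ((m:ℝ) + n * x t)) *
        (Rstar + (if x t < xs + ε then K * (xbar - x t) else 0) - d / ((m:ℝ) + n * x t)) :=
    fun t ht => (hode t ht).deriv
  have hdnn : ∀ t : ℝ, 0 ≤ t → 0 ≤ deriv x t := by
    intro t ht
    rw [hderiv t ht]
    obtain ⟨h01, h02⟩ := hmem t ht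
    have hφ := (hφpos (x t) h01 h02).le
    have hD : 0 < (m:ℝ) + n * x t := by
      have := mul_nonneg hN.le h01; linarith
    exact mul_nonneg (div_nonneg (mul_nonneg h01 (by linarith)) hD.le) hφ
  have hmono : MonotoneOn x (Set.Ici (0:ℝ)) := by
    apply monotoneOn_of_deriv_nonneg (convex_Ici 0) hcont
    · intro t ht
      rw [interior_Ici] at ht
      exact ((hode t ht.le).differentiableAt).differentiableWithinAt
    · intro t ht
      rw [interior_Ici] at ht
      exact hdnn t ht.le
  -- the limit L
  have hne : (x '' Set.Ici (0:ℝ)).Nonempty := ⟨x 0, 0, Set.self_mem_Ici, rfl⟩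
  have hub : ∀ y ∈ x '' Set.Ici (0:ℝ), y ≤ 1 := by
    rintro y ⟨t, ht, rfl⟩; exact (hmem t ht).2
  have hbdd : BddAbove (x '' Set.Ici (0:ℝ)) := ⟨1, hub⟩
  set L := sSup (x '' Set.Ici (0:ℝ)) with hL_def
  clear_value L
  have hxleL : ∀ t : ℝ, 0 ≤ t → x t ≤ L := by
    intro t ht; rw [hL_def]; exact le_csSup hbdd ⟨t, ht, rfl⟩
  have hL1 : L ≤ 1 := by rw [hL_def]; exact csSup_le hne hub
  have h0L : x 0 ≤ L := hxleL 0 le_rfl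
  have htend : Filter.Tendsto x Filter.atTop (nhds L) := by
    rw [Metric.tendsto_atTop]
    intro δ hδ
    obtain ⟨y, ⟨t1, ht1, rfl⟩, hy⟩ := exists_lt_of_lt_csSup hne
      (by rw [← hL_def]; linarith : L - δ < sSup (x '' Set.Ici (0:ℝ)))
    refine ⟨max t1 0, fun t ht => ?_⟩
    have ht0 : (0:ℝ) ≤ t := le_trans (le_max_right _ _) ht
    have h1t : x t1 ≤ x t := hmono ht1 ht0 (le_trans (le_max_left _ _) ht)
    have h2t : x t ≤ L := hxleL t ht0
    rw [Real.dist_eq, abs_lt]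
    constructor <;> linarith
  -- the limit is 1
  have hLeq : L = 1 := by
    by_contra hne1
    have hLlt : L < 1 := lt_of_le_of_ne hL1 hne1
    obtain ⟨c, hc, hcb⟩ := hglb L hLlt h0L
    have hgrow : ∀ t : ℝ, 0 ≤ t → x 0 + c * t ≤ x t := by
      intro t ht
      have hmono2 : MonotoneOn (fun u => x u - c * u) (Set.Ici (0:ℝ)) := by
        apply monotoneOn_of_deriv_nonneg (convex_Ici 0)
        · exact hcont.sub (continuous_const.mul continuous_id).continuousOn
        · intro s hs
          rw [interior_Ici] at hs
          exact (((hode s hs.le).sub ((hasDerivAt_id s).const_mul c)).differentiableAt).differentiableWithinAt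
        · intro s hs
          rw [interior_Ici] at hs
          have hds : HasDerivAt (fun u => x u - c * u)
              ((x s * (1 - x s) / ((m:ℝ) + n * x s)) *
                (Rstar + (if x s < xs + ε then K * (xbar - x s) else 0)
                  - d / ((m:ℝ) + n * x s)) - c * 1) s :=
            (hode s hs.le).sub ((hasDerivAt_id s).const_mul c)
          rw [hds.deriv]
          have hxa : x 0 ≤ x s := hmono (le_refl (0:ℝ)) (Set.mem_Ici.mpr hs.le) hs.le
          have hxL : x s ≤ L := hxleL s hs.le
          have := hcb (x s) hxa hxL
          linarith
      have h2 := hmono2 (Set.self_mem_Ici) (Set.mem_Ici.mpr ht) ht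
      simp only at h2
      linarith
    have hT : (0:ℝ) ≤ 1 / c := by positivity
    have h1' := hgrow (1 / c) hT
    have h2' := (hmem (1 / c) hT).2
    have h3' : c * (1 / c) = 1 := by field_simp
    linarith
  rw [← hLeq]
  exact htend
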